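/- Let P̃(z) be a monic polynomial of degree 2s with complex roots 1, 1, z_1, 1/z_1, ..., z_{s-1}, 1/z_{s-1} (counted with multiplicity), where each z_j ≠ 1. Then ∏_{j=1}^{n-1} P̃(ε^j) = n^2 · ∏_{j=1}^{s-1} (z_j^n + z_j^{-n} - 2)/(z_j + z_j^{-1} - 2), where ε = e^{2πi/n} is a primitive n-th root of unity. -/

import Mathlib

open Polynomial Finset

theorem prod_eval_at_roots_of_unity (n s : ℕ) (hn : 1 ≤ n) (hs : 1 ≤ s)
    (z : Fin (s - 1) → ℂ) (hz0 : ∀ j, z j ≠ 0) (hz1 : ∀ j, z j ≠ 1)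
    (P : ℂ[X])
    (hP : P = (X - 1) ^ 2 *
        ∏ j, (X - Polynomial.C (z j)) * (X - Polynomial.C (z j)⁻¹))
    (ε : ℂ) (hε : ε = Complex.exp (2 * Real.pi * Complex.I / n)) :
    ∏ j ∈ Finset.range (n - 1), P.eval (ε ^ (j + 1)) =
      (n : ℂ) ^ 2 * ∏ j, ((z j) ^ n + (z j)⁻¹ ^ n - 2) / (z j + (z j)⁻¹ - 2) := by
  have hn0 : n ≠ 0 := by omega
  have hnpos : 0 < n := hn
  have hprim : IsPrimitiveRoot ε n := by
    rw [hε]; exact Complex.isPrimitiveRoot_exp n hn0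
  -- the nth roots of unity are exactly ε^j for j < n
  have hset : nthRootsFinset n (1 : ℂ) = (range n).image (ε ^ ·) := by
    symm
    apply Finset.eq_of_subset_of_card_le
    · intro x hx
      simp only [mem_image] at hx
      obtain ⟨j, hj, rfl⟩ := hx
      exact (mem_nthRootsFinset hnpos (1 : ℂ)).2 (by
        rw [← pow_mul, mul_comm, pow_mul, hprim.pow_eq_one, one_pow])
    · rw [hprim.card_nthRootsFinset, Finset.card_image_of_injOn hprim.injOn_pow,
        card_range]
  have h1 : ∏ j ∈ range n, (X - C (ε ^ j)) = (X : ℂ[X]) ^ n - 1 := by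
    rw [X_pow_sub_one_eq_prod hnpos hprim, hset,
      Finset.prod_image (fun a ha b hb h => hprim.injOn_pow ha hb h)]
  -- polynomial identity for the product over j = 1, ..., n-1
  have hQ : ∏ j ∈ range (n - 1), (X - C (ε ^ (j + 1))) =
      ∑ k ∈ range n, (X : ℂ[X]) ^ k := by
    have h2 : (X - 1 : ℂ[X]) * ∏ j ∈ range (n - 1), (X - C (ε ^ (j + 1))) =
        (X : ℂ[X]) ^ n - 1 := by
      rw [← h1]
      conv_rhs => rw [show n = (n - 1) + 1 by omega, Finset.prod_range_succ']
      simp [mul_comm]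
    have h3 : (X - 1 : ℂ[X]) * ∑ k ∈ range n, (X : ℂ[X]) ^ k =
        (X : ℂ[X]) ^ n - 1 := by
      have := geom_sum_mul (X : ℂ[X]) n
      linear_combination this
    have hX1 : (X - 1 : ℂ[X]) ≠ 0 := by
      simpa using X_sub_C_ne_zero (1 : ℂ)
    exact mul_left_cancel₀ hX1 (h2.trans h3.symm)
  -- scalar version
  have key : ∀ x : ℂ, ∏ j ∈ range (n - 1), (x - ε ^ (j + 1)) =
      ∑ k ∈ range n, x ^ k := by
    intro x
    have := congrArg (Polynomial.eval x) hQ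
    simpa [eval_prod, eval_finset_sum] using this
  -- product with reversed sign
  have key' : ∀ w : ℂ, ∏ j ∈ range (n - 1), (ε ^ (j + 1) - w) =
      (-1) ^ (n - 1) * ∑ k ∈ range n, w ^ k := by
    intro w
    calc ∏ j ∈ range (n - 1), (ε ^ (j + 1) - w)
        = ∏ j ∈ range (n - 1), (-1) * (w - ε ^ (j + 1)) := by
          apply Finset.prod_congr rfl; intros; ring
      _ = (-1) ^ (n - 1) * ∏ j ∈ range (n - 1), (w - ε ^ (j + 1)) := by
          rw [Finset.prod_mul_distrib, Finset.prod_const, card_range]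
      _ = (-1) ^ (n - 1) * ∑ k ∈ range n, w ^ k := by rw [key w]
  have hsq : (((-1 : ℂ)) ^ (n - 1)) ^ 2 = 1 := by
    rw [← pow_mul]
    exact Even.neg_one_pow ⟨n - 1, by ring⟩
  -- compute the LHS
  rw [hP]
  simp only [eval_mul, eval_pow, eval_sub, eval_one, eval_X, eval_prod, eval_C]
  rw [Finset.prod_mul_distrib, Finset.prod_pow, key' 1, Finset.prod_comm]
  have hG1 : ∑ k ∈ range n, (1 : ℂ) ^ k = n := by simp
  rw [hG1, mul_pow, hsq, one_mul]
  congr 1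
  apply Finset.prod_congr rfl
  intro k _
  rw [Finset.prod_mul_distrib, key' (z k), key' (z k)⁻¹]
  set w := z k with hw
  have hw0 : w ≠ 0 := hz0 k
  have hw1 : w ≠ 1 := hz1 k
  have hwm1 : w - 1 ≠ 0 := sub_ne_zero.2 hw1
  have hwi1 : w⁻¹ ≠ 1 := by
    intro h
    apply hw1
    field_simp at h
    exact h.symm
  have hwim1 : w⁻¹ - 1 ≠ 0 := sub_ne_zero.2 hwi1
  have hden : w + w⁻¹ - 2 ≠ 0 := by
    intro h
    apply hwm1
    have h2 : (w - 1) ^ 2 = w * (w + w⁻¹ - 2) := by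
      field_simp; ring
    have := h2.trans (by rw [h, mul_zero])
    exact pow_eq_zero_iff (n := 2) (by norm_num) |>.1 this
  rw [geom_sum_eq hw1 n, geom_sum_eq hwi1 n]
  have hcalc : ((w ^ n - 1) / (w - 1)) * ((w⁻¹ ^ n - 1) / (w⁻¹ - 1)) =
      (w ^ n + w⁻¹ ^ n - 2) / (w + w⁻¹ - 2) := by
    rw [div_mul_div_comm, div_eq_div_iff (by exact mul_ne_zero hwm1 hwim1) hden]
    have hwn : w ^ n ≠ 0 := pow_ne_zero n hw0
    have hinv : w ^ n * w⁻¹ ^ n = 1 := by rw [← mul_pow, mul_inv_cancel₀ hw0, one_pow]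
    field_simp
    linear_combination (1 - 2 * w + w ^ 2) * hinv
  calc (-1 : ℂ) ^ (n - 1) * ((w ^ n - 1) / (w - 1)) *
        ((-1) ^ (n - 1) * ((w⁻¹ ^ n - 1) / (w⁻¹ - 1)))
      = ((-1 : ℂ) ^ (n - 1)) ^ 2 *
        (((w ^ n - 1) / (w - 1)) * ((w⁻¹ ^ n - 1) / (w⁻¹ - 1))) := by ring
    _ = (w ^ n + w⁻¹ ^ n - 2) / (w + w⁻¹ - 2) := by rw [hsq, one_mul, hcalc]
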